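/- Let a,b,c > 0. There exist z,w ∈ ℂ with |z| = |w| = 1 and P(z,w) = 0 if and only if √a = √b + √c, or √b = √a + √c, or √c = √a + √b. -/

import Mathlib

/-- Sorted case of the quintic inequality. -/
lemma Enn_sorted (a b c : ℝ) (hc : 0 ≤ c) (hcb : c ≤ b) (hba : b ≤ a) :
    0 ≤ a^5+b^5+c^5 - a*(b^2-c^2)^2 - b*(a^2-c^2)^2 - c*(a^2-b^2)^2 := by
  have hp : 0 ≤ b - c := by linarith
  have hq : 0 ≤ a - b := by linarith
  nlinarith [pow_nonneg hq 5, mul_nonneg hp (pow_nonneg hq 4),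
    mul_nonneg (pow_nonneg hp 2) (pow_nonneg hq 3),
    mul_nonneg (pow_nonneg hp 3) (pow_nonneg hq 2),
    mul_nonneg hc (pow_nonneg hq 4),
    mul_nonneg (mul_nonneg hc hp) (pow_nonneg hq 3),
    mul_nonneg (mul_nonneg hc (pow_nonneg hp 2)) (pow_nonneg hq 2),
    mul_nonneg (pow_nonneg hc 2) (pow_nonneg hq 3),
    mul_nonneg (mul_nonneg (pow_nonneg hc 2) hp) (pow_nonneg hq 2),
    mul_nonneg (mul_nonneg (pow_nonneg hc 2) (pow_nonneg hp 2)) hq,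
    mul_nonneg (pow_nonneg hc 2) (pow_nonneg hp 3),
    mul_nonneg (pow_nonneg hc 3) (pow_nonneg hq 2),
    mul_nonneg (mul_nonneg (pow_nonneg hc 3) hp) hq,
    mul_nonneg (pow_nonneg hc 3) (pow_nonneg hp 2),
    mul_nonneg (pow_nonneg hc 4) hq,
    mul_nonneg (pow_nonneg hc 4) hp,
    pow_nonneg hc 5]

lemma Enn (a b c : ℝ) (ha : 0 ≤ a) (hb : 0 ≤ b) (hc : 0 ≤ c) :
    0 ≤ a^5+b^5+c^5 - a*(b^2-c^2)^2 - b*(a^2-c^2)^2 - c*(a^2-b^2)^2 := by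
  rcases le_total a b with h1 | h1 <;> rcases le_total b c with h2 | h2 <;>
    rcases le_total a c with h3 | h3
  · nlinarith [Enn_sorted c b a ha h1 h2]
  · nlinarith [Enn_sorted c b a ha h1 h2]
  · nlinarith [Enn_sorted b c a ha h3 h2]
  · nlinarith [Enn_sorted b a c hc h3 h1]
  · nlinarith [Enn_sorted c a b hb h1 h3]
  · nlinarith [Enn_sorted a c b hb h2 h3]
  · nlinarith [Enn_sorted c a b hb h1 h3]
  · nlinarith [Enn_sorted a b c hc h2 h1]

/-- The quadratic form is PSD. -/
lemma Fnn (a b c s t : ℝ) (ha : 0 < a) (hb : 0 < b) (hc : 0 < c) :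
    0 ≤ a*b*(a^2+b^2-c^2)*s^2 + a*c*(a^2+c^2-b^2)*t^2 + b*c*(b^2+c^2-a^2)*(s-t)^2 := by
  have hd : 0 < b*(a+c)*((a-c)^2+b^2) := by positivity
  have hE := Enn a b c ha.le hb.le hc.le
  nlinarith [sq_nonneg ((a*b*(a^2+b^2-c^2)+b*c*(b^2+c^2-a^2))*s - b*c*(b^2+c^2-a^2)*t),
    mul_nonneg (mul_nonneg (mul_nonneg ha.le hb.le) hc.le) (mul_nonneg hE (sq_nonneg t)),
    hd]

lemma Knn (a b c x y u p q : ℝ) (ha : 0 < a) (hb : 0 < b) (hc : 0 < c)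
    (hp : x^2 + p^2 = 1) (hq : y^2 + q^2 = 1) (hu : u = x*y + p*q) :
    0 ≤ a*b*(a^2+b^2-c^2)*(1-x) + a*c*(a^2+c^2-b^2)*(1-y)
      + b*c*(b^2+c^2-a^2)*(1-u) := by
  have h1 := Fnn a b c (x-1) (y-1) ha hb hc
  have h2 := Fnn a b c p q ha hb hc
  have e : 2*(a*b*(a^2+b^2-c^2)*(1-x) + a*c*(a^2+c^2-b^2)*(1-y)
      + b*c*(b^2+c^2-a^2)*(1-u))
      = (a*b*(a^2+b^2-c^2)*(x-1)^2 + a*c*(a^2+c^2-b^2)*(y-1)^2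
          + b*c*(b^2+c^2-a^2)*((x-1)-(y-1))^2)
        + (a*b*(a^2+b^2-c^2)*p^2 + a*c*(a^2+c^2-b^2)*q^2
          + b*c*(b^2+c^2-a^2)*(p-q)^2) := by
    linear_combination (-(a*b*(a^2+b^2-c^2)) - b*c*(b^2+c^2-a^2))*hp
      + (-(a*c*(a^2+c^2-b^2)) - b*c*(b^2+c^2-a^2))*hq
      - 2*(b*c*(b^2+c^2-a^2))*hu
  linarith

lemma Qzero (a b c : ℝ) (ha : 0 < a) (hb : 0 < b) (hc : 0 < c)
    (h : Real.sqrt a = Real.sqrt b + Real.sqrt c) :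
    a^2+b^2+c^2-2*a*b-2*b*c-2*a*c = 0 := by
  have e1 : a = (Real.sqrt b + Real.sqrt c)^2 := by
    rw [← h]; exact (Real.sq_sqrt ha.le).symm
  have e2 : b = Real.sqrt b ^ 2 := (Real.sq_sqrt hb.le).symm
  have e3 : c = Real.sqrt c ^ 2 := (Real.sq_sqrt hc.le).symm
  have h1 : a - b - c = 2*(Real.sqrt b * Real.sqrt c) := by
    linear_combination e1 - e2 - e3
  have h2 : b*c = (Real.sqrt b * Real.sqrt c)^2 := by
    linear_combination c*e2 + (Real.sqrt b ^2)*e3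
  linear_combination ((a-b-c) + 2*(Real.sqrt b * Real.sqrt c))*h1 - 4*h2

/-- The characteristic polynomial `P(z,w)` of the 1-2 model with parameters
`a`, `b`, `c`. -/
noncomputable def charPoly (a b c : ℝ) (z w : ℂ) : ℂ :=
  ((a ^ 4 + b ^ 4 + c ^ 4 + 6 * a ^ 2 * b ^ 2 + 6 * a ^ 2 * c ^ 2
      + 6 * b ^ 2 * c ^ 2 : ℝ) : ℂ)
    - 2 * (a : ℂ) * (b : ℂ) * (z + 1 / z) * ((a ^ 2 + b ^ 2 - c ^ 2 : ℝ) : ℂ)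
    - 2 * (a : ℂ) * (c : ℂ) * (w + 1 / w) * ((a ^ 2 + c ^ 2 - b ^ 2 : ℝ) : ℂ)
    - 2 * (b : ℂ) * (c : ℂ) * (z / w + w / z) * ((b ^ 2 + c ^ 2 - a ^ 2 : ℝ) : ℂ)

/-- For `a,b,c > 0`, the spectral curve meets the unit torus
if and only if `√a = √b + √c`, `√b = √a + √c`, or `√c = √a + √b`. -/
theorem spectral_curve_intersects_iff
    (a b c : ℝ) (ha : 0 < a) (hb : 0 < b) (hc : 0 < c) :
    (∃ z w : ℂ, ‖z‖ = 1 ∧ ‖w‖ = 1 ∧ charPoly a b c z w = 0) ↔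
      (Real.sqrt a = Real.sqrt b + Real.sqrt c ∨
        Real.sqrt b = Real.sqrt a + Real.sqrt c ∨
        Real.sqrt c = Real.sqrt a + Real.sqrt b) := by
  constructor
  · rintro ⟨z, w, hz, hw, hP⟩
    have hz0 : z ≠ 0 := by
      intro h; rw [h] at hz; simp at hz
    have hw0 : w ≠ 0 := by
      intro h; rw [h] at hw; simp at hw
    have hz1 : z * (starRingEnd ℂ) z = 1 := by
      rw [Complex.mul_conj, Complex.normSq_eq_norm_sq, hz]; norm_num
    have hw1 : w * (starRingEnd ℂ) w = 1 := by
      rw [Complex.mul_conj, Complex.normSq_eq_norm_sq, hw]; norm_num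
    have hzinv : z⁻¹ = (starRingEnd ℂ) z := inv_eq_of_mul_eq_one_right hz1
    have hwinv : w⁻¹ = (starRingEnd ℂ) w := inv_eq_of_mul_eq_one_right hw1
    have hzz : z + 1/z = ((2 * z.re : ℝ) : ℂ) := by
      rw [one_div, hzinv, Complex.add_conj]
    have hww : w + 1/w = ((2 * w.re : ℝ) : ℂ) := by
      rw [one_div, hwinv, Complex.add_conj]
    have hvv : z / w + w / z = ((2 * (z * (starRingEnd ℂ) w).re : ℝ) : ℂ) := by
      rw [div_eq_mul_inv, div_eq_mul_inv, hwinv, hzinv]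
      have hwz : w * (starRingEnd ℂ) z = (starRingEnd ℂ) (z * (starRingEnd ℂ) w) := by
        rw [map_mul, Complex.conj_conj]; ring
      rw [hwz, Complex.add_conj]
    set X := z.re with hX
    set Y := w.re with hY
    set U := (z * (starRingEnd ℂ) w).re with hUdef
    have hXP : X^2 + z.im^2 = 1 := by
      have h := Complex.sq_norm z
      rw [hz, Complex.normSq_apply] at h
      linear_combination -h
    have hYQ : Y^2 + w.im^2 = 1 := by
      have h := Complex.sq_norm w
      rw [hw, Complex.normSq_apply] at h
      linear_combination -h
    have hU : U = X*Y + z.im*w.im := by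
      rw [hUdef, Complex.mul_re, Complex.conj_re, Complex.conj_im]; ring
    have hco : ((a ^ 4 + b ^ 4 + c ^ 4 + 6 * a ^ 2 * b ^ 2 + 6 * a ^ 2 * c ^ 2
        + 6 * b ^ 2 * c ^ 2
        - 4*a*b*(a^2+b^2-c^2)*X - 4*a*c*(a^2+c^2-b^2)*Y
        - 4*b*c*(b^2+c^2-a^2)*U : ℝ) : ℂ) = 0 := by
      rw [← hP]
      unfold charPoly
      rw [hzz, hww, hvv]
      push_cast
      ring
    have hre : a ^ 4 + b ^ 4 + c ^ 4 + 6 * a ^ 2 * b ^ 2 + 6 * a ^ 2 * c ^ 2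
        + 6 * b ^ 2 * c ^ 2
        - 4*a*b*(a^2+b^2-c^2)*X - 4*a*c*(a^2+c^2-b^2)*Y
        - 4*b*c*(b^2+c^2-a^2)*U = 0 := by exact_mod_cast hco
    have hK := Knn a b c X Y U z.im w.im ha hb hc hXP hYQ hU
    have hQ2 : (a^2+b^2+c^2-2*a*b-2*b*c-2*a*c)^2 ≤ 0 := by nlinarith [hK, hre]
    have hQ : a^2+b^2+c^2-2*a*b-2*b*c-2*a*c = 0 :=
      pow_eq_zero_iff two_ne_zero |>.mp (le_antisymm hQ2 (sq_nonneg _))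
    have hsa : Real.sqrt a ^ 2 = a := Real.sq_sqrt ha.le
    have hsb : Real.sqrt b ^ 2 = b := Real.sq_sqrt hb.le
    have hsc : Real.sqrt c ^ 2 = c := Real.sq_sqrt hc.le
    have hfac : (Real.sqrt a + Real.sqrt b + Real.sqrt c)
        * ((Real.sqrt b + Real.sqrt c - Real.sqrt a)
          * ((Real.sqrt a + Real.sqrt c - Real.sqrt b)
            * (Real.sqrt a + Real.sqrt b - Real.sqrt c))) = 0 := by
      rw [← hsa, ← hsb, ← hsc] at hQ
      linear_combination -hQ
    have hpos : 0 < Real.sqrt a + Real.sqrt b + Real.sqrt c := by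
      have := Real.sqrt_pos.2 ha
      have := Real.sqrt_nonneg b
      have := Real.sqrt_nonneg c
      linarith
    rcases mul_eq_zero.mp hfac with h | h
    · exact absurd h hpos.ne'
    rcases mul_eq_zero.mp h with h | h
    · left; linarith
    rcases mul_eq_zero.mp h with h | h
    · right; left; linarith
    · right; right; linarith
  · intro h
    have hQ : a^2+b^2+c^2-2*a*b-2*b*c-2*a*c = 0 := by
      rcases h with h | h | h
      · exact Qzero a b c ha hb hc h
      · have := Qzero b a c hb ha hc h
        linarith
      · have := Qzero c a b hc ha hb h
        linarith
    refine ⟨1, 1, by simp, by simp, ?_⟩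
    have e : charPoly a b c 1 1
        = (((a^2+b^2+c^2-2*a*b-2*b*c-2*a*c)^2 : ℝ) : ℂ) := by
      unfold charPoly
      push_cast
      norm_num
      ring
    rw [e, hQ]
    norm_num
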